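/- arXiv:2111.15299 — 2 statements merged into one kernel-verified Lean document; each statement's English description precedes it below -/
import Mathlib

section
/- Let P : C^op → InfSL be an elementary existential doctrine with full weak comprehension and comprehensive diagonals (a variational doctrine). Then every monomorphism m : X → A in C is P-injective, i.e. P(m×m)(δ_A) = δ_X. -/
open CategoryTheory CategoryTheory.Limits Opposite

noncomputable section

universe w v u

namespace DoctrinePaper

variable {C : Type u} [Category.{v} C] [HasFiniteProducts C]

/-- The fiber of a primary doctrine `P : Cᵒᵖ ⥤ SemilatInfCat` over an object `A`. -/
abbrev Fib (P : Cᵒᵖ ⥤ SemilatInfCat.{w}) (A : C) : Type w :=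
  ↥(P.obj (op A))

/-- Reindexing along an arrow `f : A ⟶ B`. -/
def rmap (P : Cᵒᵖ ⥤ SemilatInfCat.{w}) {A B : C} (f : A ⟶ B) :
    Fib P B → Fib P A :=
  fun x => (P.map f.op) x

variable (P : Cᵒᵖ ⥤ SemilatInfCat.{w})

/-- An elementary doctrine: fibered equalities `δ A ∈ P (A ⨯ A)` such that
`E_e(α) = P⟨pr1,pr2⟩(α) ⊓ P⟨pr2,pr3⟩(δ A)` is left adjoint to reindexing along
`e = ⟨pr1,pr2,pr2⟩ : X ⨯ A ⟶ (X ⨯ A) ⨯ A`. -/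
structure IsElementary where
  δ : ∀ A : C, Fib P (A ⨯ A)
  adj :
    ∀ (X A : C) (α : Fib P (X ⨯ A)) (β : Fib P ((X ⨯ A) ⨯ A)),
      (rmap P (prod.fst : (X ⨯ A) ⨯ A ⟶ X ⨯ A) α ⊓
          rmap P (prod.lift (prod.fst ≫ prod.snd) prod.snd : (X ⨯ A) ⨯ A ⟶ A ⨯ A) (δ A) ≤ β)
        ↔ α ≤ rmap P (prod.lift (𝟙 (X ⨯ A)) prod.snd : X ⨯ A ⟶ (X ⨯ A) ⨯ A) β

/-- A `P`-equivalence relation over `A`. -/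
structure IsEqRel (hE : IsElementary P) {A : C} (ρ : Fib P (A ⨯ A)) : Prop where
  refl : hE.δ A ≤ ρ
  symm : ρ = rmap P (prod.lift prod.snd prod.fst : A ⨯ A ⟶ A ⨯ A) ρ
  trans :
    rmap P (prod.fst : (A ⨯ A) ⨯ A ⟶ A ⨯ A) ρ ⊓
        rmap P (prod.lift (prod.fst ≫ prod.snd) prod.snd : (A ⨯ A) ⨯ A ⟶ A ⨯ A) ρ ≤
      rmap P (prod.lift (prod.fst ≫ prod.fst) prod.snd : (A ⨯ A) ⨯ A ⟶ A ⨯ A) ρ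

/-- An elementary existential doctrine, together with the induced left adjoints
`∃_f` along all arrows, satisfying the adjunction law, Frobenius reciprocity, and
the Beck–Chevalley condition along pullbacks of projections. -/
structure IsExistential extends IsElementary P where
  E : ∀ {A B : C}, (A ⟶ B) → Fib P A → Fib P B
  adjE : ∀ {A B : C} (f : A ⟶ B) (α : Fib P A) (β : Fib P B),
    E f α ≤ β ↔ α ≤ rmap P f β
  frobenius : ∀ {A B : C} (f : A ⟶ B) (α : Fib P A) (β : Fib P B),
    E f (α ⊓ rmap P f β) = E f α ⊓ β
  beckChevalley : ∀ {B A A' : C} (f : A' ⟶ A) (β : Fib P (B ⨯ A)),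
    E (prod.snd : B ⨯ A' ⟶ A') (rmap P (prod.map (𝟙 B) f) β) =
      rmap P f (E (prod.snd : B ⨯ A ⟶ A) β)

/-- Descent data for a relation `ρ` over `A`. -/
def Des {A : C} (ρ : Fib P (A ⨯ A)) : Set (Fib P A) :=
  {α | rmap P (prod.fst : A ⨯ A ⟶ A) α ⊓ ρ ≤ rmap P (prod.snd : A ⨯ A ⟶ A) α}

/-- Comprehensive diagonals: `f = g` iff `⊤ = P⟨f,g⟩(δ)`. -/
def ComprehensiveDiagonals (hE : IsElementary P) : Prop :=
  ∀ {X A : C} (f g : X ⟶ A), f = g ↔ rmap P (prod.lift f g) (hE.δ A) = ⊤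

/-- (Weak) comprehension structure. -/
structure Comprehension where
  cObj : ∀ {A : C}, Fib P A → C
  cArr : ∀ {A : C} (α : Fib P A), cObj α ⟶ A
  cTop : ∀ {A : C} (α : Fib P A), rmap P (cArr α) α = ⊤
  cUniv : ∀ {A : C} (α : Fib P A) {Y : C} (f : Y ⟶ A),
    rmap P f α = ⊤ → ∃ k : Y ⟶ cObj α, k ≫ cArr α = f

/-- Full comprehension. -/
def Comprehension.Full (hC : Comprehension P) : Prop :=
  ∀ {A : C} (α β : Fib P A), α ≤ β ↔ rmap P (hC.cArr α) β = ⊤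

/-- Strong comprehension: comprehension arrows are monic. -/
def Comprehension.Strong (hC : Comprehension P) : Prop :=
  ∀ {A : C} (α : Fib P A), Mono (hC.cArr α)

/-- `P`-injective arrow. -/
def PInj (hE : IsElementary P) {X A : C} (f : X ⟶ A) : Prop :=
  rmap P (prod.map f f) (hE.δ A) = hE.δ X

/-- `P`-surjective arrow. -/
def PSurj (hEx : IsExistential P) {X A : C} (f : X ⟶ A) : Prop :=
  hEx.E f (⊤ : Fib P X) = ⊤

/-- The product relation `ρ ⊠ σ` on `(A ⨯ B) ⨯ (A ⨯ B)`. -/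
def boxprod {A B : C} (ρ : Fib P (A ⨯ A)) (σ : Fib P (B ⨯ B)) :
    Fib P ((A ⨯ B) ⨯ (A ⨯ B)) :=
  rmap P (prod.map prod.fst prod.fst) ρ ⊓ rmap P (prod.map prod.snd prod.snd) σ

lemma rmap_comp' {A B D : C} (f : A ⟶ B) (g : B ⟶ D) (x : Fib P D) :
    rmap P (f ≫ g) x = rmap P f (rmap P g x) := by
  simp only [rmap, op_comp, P.map_comp]
  rfl

/-- In an elementary existential doctrine with full weak
comprehension and comprehensive diagonals (a variational doctrine), every
monomorphism of the base is `P`-injective. -/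
theorem mono_PInj
    (hP : IsExistential P) (hC : Comprehension P)
    (hfull : hC.Full P) (hcd : ComprehensiveDiagonals P hP.toIsElementary)
    {X A : C} (m : X ⟶ A) (hm : Mono m) :
    PInj P hP.toIsElementary m := by
  set δ := hP.toIsElementary.δ with hδ
  set α : Fib P (X ⨯ X) := rmap P (prod.map m m) (δ A) with hα
  show α = δ X
  have comp_eq : ∀ {Y : C} (k : Y ⟶ X ⨯ X),
      k ≫ prod.map m m = prod.lift (k ≫ prod.fst ≫ m) (k ≫ prod.snd ≫ m) := by
    intro Y k
    apply Limits.prod.hom_ext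
    · erw [prod.lift_fst]; simp
    · erw [prod.lift_snd]; simp
  have lift_self : ∀ {Y : C} (k : Y ⟶ X ⨯ X),
      prod.lift (k ≫ (prod.fst : X ⨯ X ⟶ X)) (k ≫ prod.snd) = k := by
    intro Y k
    apply Limits.prod.hom_ext
    · erw [prod.lift_fst]
    · erw [prod.lift_snd]
  apply le_antisymm
  · -- α ≤ δ X
    rw [hfull]
    set c := hC.cArr α with hc
    have h1 : rmap P (prod.lift (c ≫ prod.fst ≫ m) (c ≫ prod.snd ≫ m)) (δ A) = ⊤ := by
      rw [← comp_eq, rmap_comp', ← hα]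
      exact hC.cTop α
    have h2 : c ≫ prod.fst ≫ m = c ≫ prod.snd ≫ m := (hcd _ _).mpr h1
    have h3 : c ≫ (prod.fst : X ⨯ X ⟶ X) = c ≫ prod.snd :=
      hm.right_cancellation _ _ (by simpa using h2)
    have h4 : rmap P (prod.lift (c ≫ (prod.fst : X ⨯ X ⟶ X)) (c ≫ prod.snd)) (δ X) = ⊤ :=
      (hcd _ _).mp h3
    rwa [lift_self] at h4
  · -- δ X ≤ α
    rw [hfull]
    set c := hC.cArr (δ X) with hc
    have h1 : rmap P (prod.lift (c ≫ (prod.fst : X ⨯ X ⟶ X)) (c ≫ prod.snd)) (δ X) = ⊤ := by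
      rw [lift_self]
      exact hC.cTop (δ X)
    have h2 : c ≫ (prod.fst : X ⨯ X ⟶ X) = c ≫ prod.snd := (hcd _ _).mpr h1
    have h3 : c ≫ prod.fst ≫ m = c ≫ prod.snd ≫ m := by rw [← Category.assoc, h2, Category.assoc]
    have h4 : rmap P (prod.lift (c ≫ prod.fst ≫ m) (c ≫ prod.snd ≫ m)) (δ A) = ⊤ :=
      (hcd _ _).mp h3
    rwa [← comp_eq, rmap_comp', ← hα] at h4

end DoctrinePaper
end
end

section
/- Let P : C^op → InfSL be an existential m-variational doctrine (elementary, existential, with comprehensive diagonals and full strong comprehension). Then P satisfies the rule of unique choice (every total single-valued relation F ∈ P(A×B) is represented by an arrow f : A → B with F(a,b) equivalent to f(a) =_B b) if and only if every arrow of C that is both P-injective and P-surjective is an isomorphism. -/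
open CategoryTheory CategoryTheory.Limits Opposite

noncomputable section

universe w v u

namespace DoctrinePaper

variable {C : Type u} [Category.{v} C] [HasFiniteProducts C]

variable (P : Cᵒᵖ ⥤ SemilatInfCat.{w})

/-- A relation `F ∈ P(A ⨯ B)` is total (entire). -/
def Total (hP : IsExistential P) {A B : C} (F : Fib P (A ⨯ B)) : Prop :=
  hP.E (prod.fst : A ⨯ B ⟶ A) F = ⊤

/-- A relation `F ∈ P(A ⨯ B)` is single-valued (functional):
`P⟨pr1,pr2⟩F ⊓ P⟨pr1,pr3⟩F ≤ P⟨pr2,pr3⟩(δ B)` in `P((A ⨯ B) ⨯ B)`. -/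
def SingleValued (hE : IsElementary P) {A B : C} (F : Fib P (A ⨯ B)) : Prop :=
  rmap P (prod.fst : (A ⨯ B) ⨯ B ⟶ A ⨯ B) F ⊓
      rmap P (prod.lift (prod.fst ≫ prod.fst) prod.snd : (A ⨯ B) ⨯ B ⟶ A ⨯ B) F ≤
    rmap P (prod.lift (prod.fst ≫ prod.snd) prod.snd : (A ⨯ B) ⨯ B ⟶ B ⨯ B) (hE.δ B)

/-- The rule of unique choice: every total single-valued relation is represented
by an arrow, `F = P(f × id)(δ B)`. -/
def RUC (hP : IsExistential P) : Prop :=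
  ∀ {A B : C} (F : Fib P (A ⨯ B)), Total P hP F → SingleValued P hP.toIsElementary F →
    ∃ f : A ⟶ B, F = rmap P (prod.map f (𝟙 B)) (hP.δ B)

-- ============ auxiliary lemmas ============

attribute [local simp] prod.lift_fst prod.lift_snd prod.lift_fst_assoc prod.lift_snd_assoc

theorem rmap_rmap {A B D : C} (f : A ⟶ B) (g : B ⟶ D) (x : Fib P D) :
    rmap P f (rmap P g x) = rmap P (f ≫ g) x := by
  simp only [rmap, op_comp, P.map_comp]; rfl

theorem rmap_id' {A : C} (x : Fib P A) : rmap P (𝟙 A) x = x := by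
  simp only [rmap, op_id, P.map_id]; rfl

theorem rmap_mono {A B : C} (f : A ⟶ B) {x y : Fib P B} (h : x ≤ y) :
    rmap P f x ≤ rmap P f y :=
  OrderHomClass.mono (show InfTopHom _ _ from P.map f.op) h

theorem rmap_top {A B : C} (f : A ⟶ B) : rmap P f (⊤ : Fib P B) = ⊤ :=
  (show InfTopHom _ _ from P.map f.op).map_top'

theorem rmap_inf {A B : C} (f : A ⟶ B) (x y : Fib P B) :
    rmap P f (x ⊓ y) = rmap P f x ⊓ rmap P f y :=
  (show InfTopHom _ _ from P.map f.op).map_inf' x y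

theorem rmap_congr {A B : C} {f g : A ⟶ B} (h : f = g) (x : Fib P B) :
    rmap P f x = rmap P g x := by rw [h]

/-- reflexivity of fibered equality : `P(Δ)(δ) = ⊤`. -/
theorem refl_delta (hE : IsElementary P) (A : C) :
    rmap P (prod.lift (𝟙 A) (𝟙 A)) (hE.δ A) = ⊤ := by
  have h := (hE.adj A A ⊤
      (rmap P (prod.fst : (A ⨯ A) ⨯ A ⟶ A ⨯ A) ⊤ ⊓
        rmap P (prod.lift (prod.fst ≫ prod.snd) prod.snd : (A ⨯ A) ⨯ A ⟶ A ⨯ A) (hE.δ A))).mp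
      le_rfl
  rw [rmap_inf, rmap_rmap, rmap_rmap, rmap_top] at h
  have h2 : (prod.lift (𝟙 (A ⨯ A)) prod.snd ≫
      prod.lift (prod.fst ≫ prod.snd) prod.snd : A ⨯ A ⟶ A ⨯ A) =
      prod.lift prod.snd prod.snd := by
    apply Limits.prod.hom_ext <;> simp
  rw [rmap_congr P h2] at h
  have h' : (⊤ : Fib P (A ⨯ A)) ≤ rmap P (prod.lift prod.snd prod.snd) (hE.δ A) :=
    le_trans h inf_le_right
  have h3 : ⊤ ≤ rmap P (prod.lift (𝟙 A) (𝟙 A))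
      (rmap P (prod.lift (prod.snd : A ⨯ A ⟶ A) prod.snd) (hE.δ A)) :=
    le_trans (le_of_eq (rmap_top P _).symm) (rmap_mono P _ h')
  rw [rmap_rmap] at h3
  have h4 : (prod.lift (𝟙 A) (𝟙 A) ≫ prod.lift (prod.snd : A ⨯ A ⟶ A) prod.snd) =
      prod.lift (𝟙 A) (𝟙 A) := by apply Limits.prod.hom_ext <;> simp
  rw [rmap_congr P h4] at h3
  exact top_le_iff.mp h3

/-- The comprehension trick: to prove `α ≤ β` it suffices to show every arrow
along which `α` pulls back to `⊤` also pulls `β` back to `⊤`. -/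
theorem le_of_pullbacks (hC : Comprehension P) (hfull : hC.Full P) {A : C}
    {α β : Fib P A}
    (h : ∀ {Z : C} (q : Z ⟶ A), rmap P q α = ⊤ → rmap P q β = ⊤) : α ≤ β :=
  (hfull α β).mpr (h (hC.cArr α) (hC.cTop α))

/-- `δ A` is the least reflexive relation. -/
theorem delta_le (hE : IsElementary P) (hC : Comprehension P) (hfull : hC.Full P)
    (hcd : ComprehensiveDiagonals P hE) {A : C} {β : Fib P (A ⨯ A)}
    (h : rmap P (prod.lift (𝟙 A) (𝟙 A)) β = ⊤) : hE.δ A ≤ β := by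
  apply le_of_pullbacks P hC hfull
  intro Z q hq
  have hq' : q ≫ prod.fst = q ≫ prod.snd := by
    rw [hcd]
    have : prod.lift (q ≫ prod.fst) (q ≫ prod.snd) = q := by
      apply Limits.prod.hom_ext <;> simp
    rw [rmap_congr P this]; exact hq
  have hq2 : q = (q ≫ prod.fst) ≫ prod.lift (𝟙 A) (𝟙 A) := by
    apply Limits.prod.hom_ext <;> simp [hq']
  rw [rmap_congr P hq2, ← rmap_rmap, h, rmap_top]

theorem E_mono (hP : IsExistential P) {A B : C} (f : A ⟶ B) {x y : Fib P A}
    (h : x ≤ y) : hP.E f x ≤ hP.E f y :=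
  (hP.adjE f x _).mpr (le_trans h ((hP.adjE f y _).mp le_rfl))

theorem E_comp (hP : IsExistential P) {A B D : C} (f : A ⟶ B) (g : B ⟶ D)
    (α : Fib P A) : hP.E (f ≫ g) α = hP.E g (hP.E f α) := by
  apply le_antisymm
  · rw [hP.adjE, ← rmap_rmap]
    exact le_trans ((hP.adjE f α _).mp le_rfl)
      (rmap_mono P f ((hP.adjE g _ _).mp le_rfl))
  · rw [hP.adjE, hP.adjE, rmap_rmap]
    exact (hP.adjE (f ≫ g) α _).mp le_rfl

theorem E_cArr (hP : IsExistential P) (hC : Comprehension P) (hfull : hC.Full P)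
    {A : C} (α : Fib P A) : hP.E (hC.cArr α) ⊤ = α := by
  apply le_antisymm
  · rw [hP.adjE, hC.cTop α]
  · exact (hfull α _).mpr (top_le_iff.mp
      (le_trans (le_of_eq (hC.cTop α).symm)
        (le_trans le_top ((hP.adjE (hC.cArr α) ⊤ _).mp le_rfl))))


/-- An existential m-variational doctrine satisfies the rule of
unique choice iff every arrow which is both `P`-injective and `P`-surjective is
an isomorphism. -/
theorem RUC_iff_inj_surj_iso
    (hP : IsExistential P) (hC : Comprehension P)
    (hfull : hC.Full P) (hstrong : hC.Strong P)
    (hcd : ComprehensiveDiagonals P hP.toIsElementary) :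
    RUC P hP ↔
      ∀ {X A : C} (f : X ⟶ A), PInj P hP.toIsElementary f → PSurj P hP f → IsIso f := by
  constructor
  · -- RUC implies inj+surj arrows are iso
    intro ruc X A f hinj hsurj
    set F : Fib P (A ⨯ X) := rmap P (prod.map (𝟙 A) f) (hP.δ A) with hF
    have hqF : rmap P (prod.lift f (𝟙 X)) F = ⊤ := by
      rw [hF, rmap_rmap]
      have e : (prod.lift f (𝟙 X) ≫ prod.map (𝟙 A) f : X ⟶ A ⨯ A) =
          f ≫ prod.lift (𝟙 A) (𝟙 A) := by
        apply Limits.prod.hom_ext <;> simp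
      rw [rmap_congr P e, ← rmap_rmap, refl_delta P hP.toIsElementary, rmap_top]
    have htot : Total P hP F := by
      apply top_le_iff.mp
      have hunit : hP.E (prod.lift f (𝟙 X)) ⊤ ≤ F := by
        rw [hP.adjE, hqF]
      calc (⊤ : Fib P A) = hP.E f ⊤ := hsurj.symm
        _ = hP.E (prod.lift f (𝟙 X) ≫ prod.fst) ⊤ := by
            congr 1; simp
        _ = hP.E prod.fst (hP.E (prod.lift f (𝟙 X)) ⊤) := E_comp P hP _ _ _
        _ ≤ hP.E prod.fst F := E_mono P hP _ hunit
    have hsv : SingleValued P hP.toIsElementary F := by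
      apply le_of_pullbacks P hC hfull
      intro Z q hq
      rw [rmap_inf, inf_eq_top_iff] at hq
      obtain ⟨hq1, hq2⟩ := hq
      rw [rmap_rmap, hF, rmap_rmap] at hq1 hq2
      have a1 : q ≫ prod.fst ≫ prod.fst = q ≫ prod.fst ≫ prod.snd ≫ f := by
        rw [hcd]
        have e : (prod.lift (q ≫ prod.fst ≫ prod.fst) (q ≫ prod.fst ≫ prod.snd ≫ f) :
            Z ⟶ A ⨯ A) = (q ≫ prod.fst) ≫ prod.map (𝟙 A) f := by
          apply Limits.prod.hom_ext <;> simp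
        rw [rmap_congr P e]; exact hq1
      have a2 : q ≫ prod.fst ≫ prod.fst = (q ≫ prod.snd) ≫ f := by
        rw [hcd]
        have e : (prod.lift (q ≫ prod.fst ≫ prod.fst) ((q ≫ prod.snd) ≫ f) :
            Z ⟶ A ⨯ A) = (q ≫ prod.lift (prod.fst ≫ prod.fst) prod.snd) ≫
              prod.map (𝟙 A) f := by
          apply Limits.prod.hom_ext <;> simp
        rw [rmap_congr P e]; exact hq2
      rw [rmap_rmap, ← hinj, rmap_rmap]
      have e : ((q ≫ prod.lift (prod.fst ≫ prod.snd) prod.snd) ≫ prod.map f f :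
          Z ⟶ A ⨯ A) = (q ≫ prod.fst ≫ prod.fst) ≫ prod.lift (𝟙 A) (𝟙 A) := by
        apply Limits.prod.hom_ext
        · simp only [Category.assoc, prod.map_fst, prod.lift_fst, prod.lift_fst_assoc,
            Category.comp_id]
          exact a1.symm
        · simp only [Category.assoc, prod.map_snd, prod.lift_snd, prod.lift_snd_assoc,
            Category.comp_id]
          rw [← Category.assoc]
          exact a2.symm
      rw [rmap_congr P e, ← rmap_rmap, refl_delta P hP.toIsElementary, rmap_top]
    obtain ⟨g, hg⟩ := ruc F htot hsv
    have hfg : f ≫ g = 𝟙 X := by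
      rw [hcd]
      have e : (prod.lift (f ≫ g) (𝟙 X) : X ⟶ X ⨯ X) =
          prod.lift f (𝟙 X) ≫ prod.map g (𝟙 X) := by
        apply Limits.prod.hom_ext <;> simp
      rw [rmap_congr P e, ← rmap_rmap, ← hg, hqF]
    have hgf : g ≫ f = 𝟙 A := by
      have h1 : rmap P (prod.lift (𝟙 A) g) F = ⊤ := by
        rw [hg, rmap_rmap]
        have e : (prod.lift (𝟙 A) g ≫ prod.map g (𝟙 X) : A ⟶ X ⨯ X) =
            g ≫ prod.lift (𝟙 X) (𝟙 X) := by
          apply Limits.prod.hom_ext <;> simp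
        rw [rmap_congr P e, ← rmap_rmap, refl_delta P hP.toIsElementary, rmap_top]
      have h2 : (𝟙 A : A ⟶ A) = g ≫ f := by
        rw [hcd]
        have e : (prod.lift (𝟙 A) (g ≫ f) : A ⟶ A ⨯ A) =
            prod.lift (𝟙 A) g ≫ prod.map (𝟙 A) f := by
          apply Limits.prod.hom_ext <;> simp
        rw [rmap_congr P e, ← rmap_rmap, ← hF, h1]
      exact h2.symm
    exact ⟨⟨g, hfg, hgf⟩⟩
  · -- inj+surj arrows iso implies RUC
    intro hiso A B F htot hsv
    set p : hC.cObj F ⟶ A ⨯ B := hC.cArr F with hp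
    have hpm : Mono p := hstrong F
    set g : hC.cObj F ⟶ A := p ≫ prod.fst with hgdef
    have hFp : rmap P p F = ⊤ := hC.cTop F
    have hEp : hP.E p ⊤ = F := E_cArr P hP hC hfull F
    have hgs : PSurj P hP g := by
      unfold PSurj
      rw [hgdef, E_comp P hP, hEp, htot]
    have hgi : PInj P hP.toIsElementary g := by
      apply le_antisymm
      · apply le_of_pullbacks P hC hfull
        intro Z q hq
        rw [rmap_rmap] at hq
        have a0 : q ≫ prod.fst ≫ g = q ≫ prod.snd ≫ g := by
          rw [hcd]
          have e : (prod.lift (q ≫ prod.fst ≫ g) (q ≫ prod.snd ≫ g) : Z ⟶ A ⨯ A) =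
              q ≫ prod.map g g := by
            apply Limits.prod.hom_ext <;> simp
          rw [rmap_congr P e]; exact hq
        have hsv' := hsv
        have key := rmap_mono P
          (prod.lift ((q ≫ prod.fst) ≫ p) ((q ≫ prod.snd) ≫ p ≫ prod.snd) :
            Z ⟶ (A ⨯ B) ⨯ B) hsv'
        rw [rmap_inf, rmap_rmap, rmap_rmap, rmap_rmap] at key
        have e1 : (prod.lift ((q ≫ prod.fst) ≫ p) ((q ≫ prod.snd) ≫ p ≫ prod.snd) ≫
            prod.fst : Z ⟶ A ⨯ B) = (q ≫ prod.fst) ≫ p := by simp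
        have e2 : (prod.lift ((q ≫ prod.fst) ≫ p) ((q ≫ prod.snd) ≫ p ≫ prod.snd) ≫
            prod.lift (prod.fst ≫ prod.fst) prod.snd : Z ⟶ A ⨯ B) =
            (q ≫ prod.snd) ≫ p := by
          apply Limits.prod.hom_ext
          · simp only [Category.assoc, prod.lift_fst, prod.lift_fst_assoc]
            have := a0
            simp only [hgdef] at this
            simp only [← Category.assoc] at this ⊢
            exact this
          · simp
        have e3 : (prod.lift ((q ≫ prod.fst) ≫ p) ((q ≫ prod.snd) ≫ p ≫ prod.snd) ≫
            prod.lift (prod.fst ≫ prod.snd) prod.snd : Z ⟶ B ⨯ B) =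
            prod.lift (q ≫ prod.fst ≫ p ≫ prod.snd) (q ≫ prod.snd ≫ p ≫ prod.snd) := by
          apply Limits.prod.hom_ext <;> simp
        rw [rmap_congr P e1, rmap_congr P e2, rmap_congr P e3] at key
        rw [← rmap_rmap, hFp, rmap_top] at key
        rw [← rmap_rmap, hFp, rmap_top] at key
        have bsnd : q ≫ prod.fst ≫ p ≫ prod.snd = q ≫ prod.snd ≫ p ≫ prod.snd :=
          (hcd _ _).mpr (top_le_iff.mp (le_trans (le_of_eq (by simp)) key))
        have hq12 : q ≫ prod.fst = q ≫ prod.snd := by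
          rw [← cancel_mono p]
          apply Limits.prod.hom_ext
          · rw [Category.assoc, Category.assoc]
            have := a0
            simp only [hgdef] at this
            simpa using this
          · rw [Category.assoc, Category.assoc]
            simpa using bsnd
        have e4 : q = (q ≫ prod.fst) ≫ prod.lift (𝟙 (hC.cObj F)) (𝟙 (hC.cObj F)) := by
          apply Limits.prod.hom_ext <;> simp [hq12]
        rw [rmap_congr P e4, ← rmap_rmap, refl_delta P hP.toIsElementary, rmap_top]
      · apply delta_le P hP.toIsElementary hC hfull hcd
        rw [rmap_rmap]
        have e : (prod.lift (𝟙 (hC.cObj F)) (𝟙 (hC.cObj F)) ≫ prod.map g g :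
            hC.cObj F ⟶ A ⨯ A) = g ≫ prod.lift (𝟙 A) (𝟙 A) := by
          apply Limits.prod.hom_ext <;> simp
        rw [rmap_congr P e, ← rmap_rmap, refl_delta P hP.toIsElementary, rmap_top]
    have : IsIso g := hiso g hgi hgs
    refine ⟨inv g ≫ p ≫ prod.snd, ?_⟩
    have key1 : g ≫ inv g ≫ p ≫ prod.snd = p ≫ prod.snd := by
      rw [IsIso.hom_inv_id_assoc]
    apply le_antisymm
    · apply (hfull F _).mpr
      rw [rmap_rmap]
      have e : (p ≫ prod.map (inv g ≫ p ≫ prod.snd) (𝟙 B) : hC.cObj F ⟶ B ⨯ B) =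
          (p ≫ prod.snd) ≫ prod.lift (𝟙 B) (𝟙 B) := by
        apply Limits.prod.hom_ext
        · simp only [Category.assoc, prod.map_fst, prod.lift_fst, Category.comp_id]
          rw [← Category.assoc p, ← hgdef, IsIso.hom_inv_id_assoc]
        · simp
      rw [rmap_congr P e, ← rmap_rmap, refl_delta P hP.toIsElementary, rmap_top]
    · apply le_of_pullbacks P hC hfull
      intro Z q hq
      rw [rmap_rmap] at hq
      have a1 : q ≫ prod.fst ≫ inv g ≫ p ≫ prod.snd = q ≫ prod.snd := by
        rw [hcd]
        have e : (prod.lift (q ≫ prod.fst ≫ inv g ≫ p ≫ prod.snd) (q ≫ prod.snd) :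
            Z ⟶ B ⨯ B) = q ≫ prod.map (inv g ≫ p ≫ prod.snd) (𝟙 B) := by
          apply Limits.prod.hom_ext <;> simp
        rw [rmap_congr P e]; exact hq
      have e : q = ((q ≫ prod.fst) ≫ inv g) ≫ p := by
        apply Limits.prod.hom_ext
        · simp only [Category.assoc]
          rw [← hgdef, IsIso.inv_hom_id, Category.comp_id]
        · simp only [Category.assoc]
          exact a1.symm
      rw [rmap_congr P e, ← rmap_rmap, hFp, rmap_top]

end DoctrinePaper
end
end
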